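/- Marginal non-observability gives finite cost: let K be a gain such that A − BK has spectral radius 1, and suppose every eigenvalue λ of A − BK with |λ| = 1 fails to be (Q + KᵀRK, A − BK)-observable in the strong sense that its generalized eigenspace is contained in the kernel of ∑_{j=0}^{k}((A−BK)ᵀ)^j(Q+KᵀRK)(A−BK)^j for all k. Then for every initial vector ω, the series ∑_{j=0}^∞ ωᵀ((A−BK)ᵀ)^j (Q + KᵀRK)(A−BK)^j ω converges to a finite real number, provided all eigenvalues of modulus < 1 account for the remaining dynamics (i.e., A − BK restricted to the complement of the unit-modulus generalized eigenspaces is Schur). -/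

import Mathlib

open Matrix
open scoped ENNReal

/-- Spectral radius of a real square matrix, computed over ℂ. -/
noncomputable def specRad {n : ℕ} (A : Matrix (Fin n) (Fin n) ℝ) : ℝ≥0∞ :=
  spectralRadius ℂ (A.map Complex.ofReal)

/-- A real square matrix is Schur stable if its spectral radius is `< 1`. -/
def IsSchur {n : ℕ} (A : Matrix (Fin n) (Fin n) ℝ) : Prop := specRad A < 1

section Auxiliary

open Finset


lemma aux_summable_pow_geo (p : ℕ) {r : ℝ} (h0 : 0 < r) (h1 : r < 1) :
    Summable (fun j : ℕ => ((j : ℝ) + 1) ^ p * r ^ j) := by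
  have S : Summable (fun j : ℕ => (j : ℝ) ^ p * r ^ j) :=
    summable_pow_mul_geometric_of_norm_lt_one p
      (by rwa [Real.norm_eq_abs, abs_of_pos h0])
  have S2 : Summable (fun j : ℕ => ((j + 1 : ℕ) : ℝ) ^ p * r ^ (j + 1)) :=
    (summable_nat_add_iff 1).mpr S
  refine (S2.mul_left r⁻¹).congr ?_
  intro j; push_cast; field_simp; ring

lemma aux_sum_mulVec {n : ℕ} {ι : Type*} (s : Finset ι) (T : ι → Matrix (Fin n) (Fin n) ℂ)
    (v : Fin n → ℂ) : (∑ i ∈ s, T i) *ᵥ v = ∑ i ∈ s, T i *ᵥ v := by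
  ext x
  simp only [Matrix.mulVec, dotProduct, Matrix.sum_apply, Finset.sum_mul, Finset.sum_apply]
  rw [Finset.sum_comm]

lemma aux_expand {n : ℕ} (M : Matrix (Fin n) (Fin n) ℂ) (lam : ℂ)
    (v : Fin n → ℂ) (k : ℕ) (hv : ((M - lam • 1) ^ k).mulVec v = 0) (j : ℕ) :
    (M ^ j).mulVec v
      = ∑ i ∈ range k, ((j.choose i : ℂ) * lam ^ (j - i)) • ((M - lam • 1) ^ i).mulVec v := by
  set N := M - lam • 1 with hN
  have hvk : ∀ i, k ≤ i → (N ^ i).mulVec v = 0 := by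
    intro i hi
    have : N ^ i = N ^ (i - k) * N ^ k := by
      rw [← pow_add]; congr 1; omega
    rw [this, ← Matrix.mulVec_mulVec, hv, Matrix.mulVec_zero]
  have hM : M = N + lam • 1 := by rw [hN]; abel
  have hcomm : Commute N (lam • (1 : Matrix (Fin n) (Fin n) ℂ)) :=
    (Commute.one_right N).smul_right lam
  have hexp : M ^ j = ∑ i ∈ range (j + 1),
      ((j.choose i : ℂ) * lam ^ (j - i)) • N ^ i := by
    conv_lhs => rw [hM, hcomm.add_pow]
    refine Finset.sum_congr rfl fun i _ => ?_
    rw [smul_pow, one_pow, mul_smul_comm, mul_one,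
      ← (Nat.cast_commute (j.choose i) ((lam ^ (j - i)) • N ^ i)).eq,
      ← nsmul_eq_mul, ← Nat.cast_smul_eq_nsmul ℂ, smul_smul]
  rw [hexp, aux_sum_mulVec]
  simp_rw [Matrix.smul_mulVec]
  set f : ℕ → (Fin n → ℂ) := fun i => ((j.choose i : ℂ) * lam ^ (j - i)) • (N ^ i *ᵥ v) with hf
  have e1 : ∑ i ∈ range (j + 1), f i = ∑ i ∈ range (max (j + 1) k), f i := by
    refine Finset.sum_subset (Finset.range_subset_range.2 (le_max_left _ _)) ?_
    intro x _ hx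
    have hjx : j < x := by simpa using hx
    simp [hf, Nat.choose_eq_zero_of_lt hjx]
  have e2 : ∑ i ∈ range k, f i = ∑ i ∈ range (max (j + 1) k), f i := by
    refine Finset.sum_subset (Finset.range_subset_range.2 (le_max_right _ _)) ?_
    intro x _ hx
    have hkx : k ≤ x := by simpa using hx
    simp [hf, hvk x hkx]
  rw [e1, ← e2]

lemma aux_gen_summable {n : ℕ} (M : Matrix (Fin n) (Fin n) ℂ) (lam : ℂ) (hlam : ‖lam‖ < 1)
    (v : Fin n → ℂ) (k : ℕ) (hv : ((M - lam • 1) ^ k).mulVec v = 0) :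
    Summable (fun j : ℕ => ‖(M ^ j).mulVec v‖ ^ 2) := by
  by_cases hlam0 : lam = 0
  · -- M^j v = 0 for j ≥ k
    apply summable_of_ne_finset_zero (s := range k)
    intro j hj
    have hkj : k ≤ j := by simpa using hj
    have : (M ^ j).mulVec v = 0 := by
      rw [aux_expand M lam v k hv j]
      refine Finset.sum_eq_zero fun i hi => ?_
      have hik : i < k := Finset.mem_range.1 hi
      have : lam ^ (j - i) = 0 := by
        rw [hlam0]; exact zero_pow (by omega)
      simp [this]
    simp [this]
  · set t : ℝ := ‖lam‖ with ht
    have ht0 : 0 < t := norm_pos_iff.2 hlam0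
    have ht1 : t < 1 := hlam
    set D : ℕ → ℝ := fun i => ‖((M - lam • 1) ^ i).mulVec v‖ with hD
    -- bound the norm
    have hbnd : ∀ j, ‖(M ^ j).mulVec v‖ ≤ ∑ i ∈ range k, (j.choose i : ℝ) * t ^ (j - i) * D i := by
      intro j
      rw [aux_expand M lam v k hv j]
      refine (norm_sum_le _ _).trans ?_
      refine Finset.sum_le_sum fun i _ => ?_
      rw [norm_smul, norm_mul, norm_pow]
      simp [D, t, Complex.norm_natCast]
    -- squared bound, term-wise summable
    have hsq : ∀ j, ‖(M ^ j).mulVec v‖ ^ 2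
        ≤ (k : ℝ) * ∑ i ∈ range k, ((j.choose i : ℝ) * t ^ (j - i) * D i) ^ 2 := by
      intro j
      have h1 : ‖(M ^ j).mulVec v‖ ^ 2 ≤ (∑ i ∈ range k, (j.choose i : ℝ) * t ^ (j - i) * D i) ^ 2 := by
        apply pow_le_pow_left₀ (norm_nonneg _) (hbnd j)
      refine h1.trans ?_
      have := sq_sum_le_card_mul_sum_sq (s := range k)
        (f := fun i => (j.choose i : ℝ) * t ^ (j - i) * D i)
      simpa using this
    -- summable majorant
    have hmaj : Summable (fun j : ℕ => (k : ℝ) *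
        ∑ i ∈ range k, ((j.choose i : ℝ) * t ^ (j - i) * D i) ^ 2) := by
      apply Summable.mul_left
      apply summable_sum
      intro i hi
      -- bound each term by ((j+1)^(2*i)) * (t^2)^j * (D i ^2 / t^(2*i))
      have hterm : ∀ j, ((j.choose i : ℝ) * t ^ (j - i) * D i) ^ 2
          ≤ (D i ^ 2 / t ^ (2 * i)) * (((j : ℝ) + 1) ^ (2 * i) * (t ^ 2) ^ j) := by
        intro j
        rcases lt_or_ge j i with hji | hij
        · rw [Nat.choose_eq_zero_of_lt hji]
          have : (0:ℝ) ≤ (D i ^ 2 / t ^ (2 * i)) * (((j : ℝ) + 1) ^ (2 * i) * (t ^ 2) ^ j) := by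
            positivity
          simpa using this
        · have hc : (j.choose i : ℝ) ≤ ((j : ℝ) + 1) ^ i := by
            calc (j.choose i : ℝ) ≤ (j : ℝ) ^ i := by
                  exact_mod_cast Nat.choose_le_pow j i
              _ ≤ ((j : ℝ) + 1) ^ i := by
                  apply pow_le_pow_left₀ (by positivity) (by linarith)
          have htp : t ^ (j - i) * t ^ i = t ^ j := by
            rw [← pow_add]; congr 1; omega
          have htle : t ^ (j - i) ≤ t ^ j / t ^ i := by
            rw [le_div_iff₀ (by positivity), htp]
          have h0 : 0 ≤ (j.choose i : ℝ) := by positivity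
          have h1 : 0 ≤ t ^ (j - i) := by positivity
          calc ((j.choose i : ℝ) * t ^ (j - i) * D i) ^ 2
              = (j.choose i : ℝ) ^ 2 * (t ^ (j - i)) ^ 2 * D i ^ 2 := by ring
            _ ≤ (((j : ℝ) + 1) ^ i) ^ 2 * (t ^ j / t ^ i) ^ 2 * D i ^ 2 := by
                apply mul_le_mul_of_nonneg_right
                apply mul_le_mul (by apply pow_le_pow_left₀ h0 hc) (by apply pow_le_pow_left₀ h1 htle)
                  (by positivity) (by positivity)
                positivity
            _ = (D i ^ 2 / t ^ (2 * i)) * (((j : ℝ) + 1) ^ (2 * i) * (t ^ 2) ^ j) := by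
                field_simp
                ring
      have ht2 : (0:ℝ) < t ^ 2 := by positivity
      have ht2' : t ^ 2 < 1 := by
        calc t ^ 2 ≤ t := by nlinarith
          _ < 1 := ht1
      exact Summable.of_nonneg_of_le (fun j => by positivity) hterm
        ((aux_summable_pow_geo (2 * i) ht2 ht2').mul_left _)
    exact Summable.of_nonneg_of_le (fun j => by positivity) hsq hmaj

-- dot product norm bound (sup norm on Pi)
lemma aux_dot_norm {n : ℕ} (x y : Fin n → ℂ) : ‖x ⬝ᵥ y‖ ≤ (n : ℝ) * ‖x‖ * ‖y‖ := by
  refine (norm_sum_le _ _).trans ?_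
  have : ∀ i : Fin n, ‖x i * y i‖ ≤ ‖x‖ * ‖y‖ := fun i => by
    rw [norm_mul]
    exact mul_le_mul (norm_le_pi_norm x i) (norm_le_pi_norm y i) (norm_nonneg _) (norm_nonneg _)
  refine (Finset.sum_le_sum fun i _ => this i).trans ?_
  simp [mul_assoc]

-- operator bound for mulVec
lemma aux_mulVec_bound {n : ℕ} (T : Matrix (Fin n) (Fin n) ℂ) :
    ∃ c : ℝ, 0 ≤ c ∧ ∀ x : Fin n → ℂ, ‖T *ᵥ x‖ ≤ c * ‖x‖ := by
  let g := LinearMap.toContinuousLinearMap (Matrix.mulVecLin T)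
  exact ⟨‖g‖, norm_nonneg g, fun x => g.le_opNorm x⟩

lemma aux_ofReal_dot {n : ℕ} (x y : Fin n → ℝ) :
    ((x ⬝ᵥ y : ℝ) : ℂ) = (fun i => (x i : ℂ)) ⬝ᵥ (fun i => (y i : ℂ)) := by
  simp [dotProduct]

lemma aux_ofReal_mulVec {n : ℕ} (T : Matrix (Fin n) (Fin n) ℝ) (x : Fin n → ℝ) :
    (fun i => (((T *ᵥ x) i : ℝ) : ℂ)) = (T.map Complex.ofReal) *ᵥ (fun i => (x i : ℂ)) := by
  ext i
  simp [Matrix.mulVec, dotProduct, Matrix.map_apply]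

end Auxiliary

/-- Marginal non-observability gives finite cost: if `ρ(A − BK) = 1`, all
eigenvalues of `A − BK` have modulus `≤ 1`, and every generalized eigenvector associated with a
unit-modulus eigenvalue is annihilated by all partial sums
`∑_{j=0}^{k}(A_Kᵀ)^j(Q + KᵀRK)A_K^j`, then for every initial vector `ω` the infinite-horizon
cost series converges to a finite real number. -/
theorem stmt19 {n m : ℕ} (A : Matrix (Fin n) (Fin n) ℝ) (B : Matrix (Fin n) (Fin m) ℝ)
    (Q : Matrix (Fin n) (Fin n) ℝ) (R : Matrix (Fin m) (Fin m) ℝ)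
    (hQ : Qᵀ = Q) (hR : Rᵀ = R)
    (K : Matrix (Fin m) (Fin n) ℝ)
    (hρ : specRad (A - B * K) = 1)
    (hbound : ∀ lam ∈ spectrum ℂ ((A - B * K).map Complex.ofReal), ‖lam‖ ≤ 1)
    (hobs : ∀ lam ∈ spectrum ℂ ((A - B * K).map Complex.ofReal), ‖lam‖ = 1 →
      ∀ v : Fin n → ℂ,
        (∃ k : ℕ, (((A - B * K).map Complex.ofReal - lam • 1) ^ k).mulVec v = 0) →
        ∀ k : ℕ,
          ((∑ j ∈ Finset.range (k + 1),
              (((A - B * K).map Complex.ofReal)ᵀ) ^ j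
                * ((Q + Kᵀ * R * K).map Complex.ofReal)
                * ((A - B * K).map Complex.ofReal) ^ j)).mulVec v = 0) :
    ∀ ω : Fin n → ℝ, ∃ L : ℝ,
      HasSum (fun j : ℕ =>
        ω ⬝ᵥ (((A - B * K)ᵀ) ^ j * (Q + Kᵀ * R * K) * (A - B * K) ^ j).mulVec ω) L := by
  intro ω
  set Mr : Matrix (Fin n) (Fin n) ℝ := A - B * K with hMr
  set Cr : Matrix (Fin n) (Fin n) ℝ := Q + Kᵀ * R * K with hCrdef
  set Mc : Matrix (Fin n) (Fin n) ℂ := Mr.map Complex.ofReal with hMc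
  set Cc : Matrix (Fin n) (Fin n) ℂ := Cr.map Complex.ofReal with hCc
  have hCrT : Crᵀ = Cr := by
    rw [hCrdef]
    rw [Matrix.transpose_add, Matrix.transpose_mul, Matrix.transpose_mul, hQ, hR,
      Matrix.transpose_transpose, Matrix.mul_assoc]
  have hCcT : Ccᵀ = Cc := by
    rw [hCc, ← Matrix.transpose_map, hCrT]
  -- the endomorphism
  set f : Module.End ℂ (Fin n → ℂ) := Matrix.toLinAlgEquiv' Mc with hf
  have hfspec : spectrum ℂ f = spectrum ℂ Mc := AlgEquiv.spectrum_eq _ _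
  -- translation between End powers and matrix powers
  have hEnd : ∀ (lam : ℂ) (k : ℕ) (v : Fin n → ℂ),
      ((f - lam • 1) ^ k) v = ((Mc - lam • 1) ^ k) *ᵥ v := by
    intro lam k v
    have h1 : f - lam • 1 = Matrix.toLinAlgEquiv' (Mc - lam • 1) := by
      rw [map_sub, hf]
      congr 1
      rw [_root_.map_smul, _root_.map_one]
    rw [h1, ← map_pow]
    exact Matrix.toLinAlgEquiv'_apply _ v
  -- nonzero generalized eigenvectors give spectrum membership
  have hspec_of : ∀ (lam : ℂ) (v : Fin n → ℂ), v ≠ 0 →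
      v ∈ f.maxGenEigenspace lam → lam ∈ spectrum ℂ Mc := by
    intro lam v hv0 hv
    rw [Module.End.mem_maxGenEigenspace] at hv
    obtain ⟨k, hk⟩ := hv
    have hk1 : ((f - lam • 1) ^ (k + 1)) v = 0 := by
      rw [pow_succ', Module.End.mul_apply, hk, map_zero]
    have hgen : f.HasGenEigenvalue lam (k + 1) := by
      rw [Module.End.hasGenEigenvalue_iff]
      intro hbot
      have : v ∈ (f.genEigenspace lam) ((k + 1 : ℕ) : ℕ∞) := by
        rw [Module.End.mem_genEigenspace_nat, LinearMap.mem_ker]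
        exact hk1
      rw [hbot] at this
      exact hv0 (Submodule.mem_bot ℂ |>.1 this)
    have heig : f.HasEigenvalue lam := Module.End.hasEigenvalue_of_hasGenEigenvalue hgen
    rw [← hfspec]
    exact Module.End.hasEigenvalue_iff_mem_spectrum.1 heig
  -- the two invariant subspaces
  set U : Submodule ℂ (Fin n → ℂ) :=
    ⨆ lam : ℂ, ⨆ _ : ‖lam‖ = 1, f.maxGenEigenspace lam with hU
  set S : Submodule ℂ (Fin n → ℂ) :=
    ⨆ lam : ℂ, ⨆ _ : ‖lam‖ < 1, f.maxGenEigenspace lam with hS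
  have hdecomp : U ⊔ S = ⊤ := by
    rw [eq_top_iff, ← Module.End.iSup_maxGenEigenspace_eq_top f]
    apply iSup_le
    intro lam
    rcases lt_trichotomy ‖lam‖ 1 with h1 | h1 | h1
    · exact le_trans (le_iSup₂ (f := fun lam (_ : ‖lam‖ < 1) => f.maxGenEigenspace lam) lam h1)
        le_sup_right
    · exact le_trans (le_iSup₂ (f := fun lam (_ : ‖lam‖ = 1) => f.maxGenEigenspace lam) lam h1)
        le_sup_left
    · -- impossible: would give an eigenvalue of modulus > 1
      intro v hv
      by_cases hv0 : v = 0
      · simp [hv0]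
      · exact absurd (hbound lam (hspec_of lam v hv0 hv)) (not_le.2 h1)
  -- decompose ω
  set ωc : Fin n → ℂ := fun i => (ω i : ℂ) with hωc
  obtain ⟨u, hu, s, hs, hus⟩ := Submodule.mem_sup.1 (hdecomp ▸ Submodule.mem_top (x := ωc))
  -- the unit-circle part is annihilated by every term
  have hUker : ∀ v ∈ U, ∀ j : ℕ, ((Mcᵀ) ^ j * Cc * Mc ^ j) *ᵥ v = 0 := by
    intro v hv
    refine Submodule.iSup_induction _ (motive := fun v => ∀ j : ℕ, ((Mcᵀ) ^ j * Cc * Mc ^ j) *ᵥ v = 0)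
      hv ?_ ?_ ?_
    · intro lam x hx
      by_cases h1 : ‖lam‖ = 1
      · rw [iSup_pos h1] at hx
        by_cases hx0 : x = 0
        · intro j; simp [hx0]
        · have hlamspec := hspec_of lam x hx0 hx
          rw [Module.End.mem_maxGenEigenspace] at hx
          obtain ⟨k, hk⟩ := hx
          rw [hEnd] at hk
          have hpartial := hobs lam hlamspec h1 x ⟨k, hk⟩
          intro j
          cases j with
          | zero => simpa [Finset.sum_range_one] using hpartial 0
          | succ jj =>
            have e1 := hpartial (jj + 1)
            have e2 := hpartial jj
            rw [Finset.sum_range_succ, Matrix.add_mulVec, e2, zero_add] at e1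
            exact e1
      · rw [iSup_neg h1] at hx
        intro j
        simp [(Submodule.mem_bot ℂ).1 hx]
    · intro j; simp
    · intro x y hx hy j
      rw [Matrix.mulVec_add, hx j, hy j, add_zero]
  -- the stable part gives a summable series
  have hSsum : ∀ v ∈ S, Summable (fun j : ℕ => ‖(Mc ^ j) *ᵥ v‖ ^ 2) := by
    intro v hv
    refine Submodule.iSup_induction _
      (motive := fun v => Summable (fun j : ℕ => ‖(Mc ^ j) *ᵥ v‖ ^ 2)) hv ?_ ?_ ?_
    · intro lam x hx
      by_cases h1 : ‖lam‖ < 1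
      · rw [iSup_pos h1] at hx
        rw [Module.End.mem_maxGenEigenspace] at hx
        obtain ⟨k, hk⟩ := hx
        rw [hEnd] at hk
        exact aux_gen_summable Mc lam h1 x k hk
      · rw [iSup_neg h1] at hx
        have : x = 0 := (Submodule.mem_bot ℂ).1 hx
        subst this
        exact summable_zero.congr (fun j => by simp)
    · exact summable_zero.congr (fun j => by simp)
    · intro x y hx hy
      refine Summable.of_nonneg_of_le (fun j => by positivity) (fun j => ?_)
        ((hx.mul_left 2).add (hy.mul_left 2))
      have hn : ‖(Mc ^ j) *ᵥ (x + y)‖ ≤ ‖(Mc ^ j) *ᵥ x‖ + ‖(Mc ^ j) *ᵥ y‖ := by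
        rw [Matrix.mulVec_add]; exact norm_add_le _ _
      nlinarith [norm_nonneg ((Mc ^ j) *ᵥ (x + y)), norm_nonneg ((Mc ^ j) *ᵥ x),
        norm_nonneg ((Mc ^ j) *ᵥ y), sq_nonneg (‖(Mc ^ j) *ᵥ x‖ - ‖(Mc ^ j) *ᵥ y‖)]
  -- complexification of the cost terms
  have hψ : ∀ X Y : Matrix (Fin n) (Fin n) ℝ,
      (X * Y).map Complex.ofReal = X.map Complex.ofReal * Y.map Complex.ofReal := by
    intro X Y
    exact Matrix.map_mul (f := Complex.ofRealHom)
  have hψpow : ∀ (X : Matrix (Fin n) (Fin n) ℝ) (j : ℕ),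
      (X ^ j).map Complex.ofReal = (X.map Complex.ofReal) ^ j := by
    intro X j
    induction j with
    | zero => simp [Matrix.map_one]
    | succ i ih => rw [pow_succ, pow_succ, hψ, ih]
  have hmapT : ∀ j : ℕ, ((Mrᵀ) ^ j * Cr * Mr ^ j).map Complex.ofReal
      = (Mcᵀ) ^ j * Cc * Mc ^ j := by
    intro j
    rw [hψ, hψ, hψpow, hψpow, Matrix.transpose_map]
  -- key identity for the cost terms
  set a : ℕ → ℝ := fun j => ω ⬝ᵥ ((Mrᵀ) ^ j * Cr * Mr ^ j) *ᵥ ω with ha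
  have hcast : ∀ j : ℕ, ((a j : ℝ) : ℂ)
      = ((Mc ^ j) *ᵥ s) ⬝ᵥ (Cc *ᵥ ((Mc ^ j) *ᵥ s)) := by
    intro j
    set Tc : Matrix (Fin n) (Fin n) ℂ := (Mcᵀ) ^ j * Cc * Mc ^ j with hTc
    have hsym : Tcᵀ = Tc := by
      rw [hTc, Matrix.transpose_mul, Matrix.transpose_mul, Matrix.transpose_pow,
        Matrix.transpose_pow, Matrix.transpose_transpose, hCcT, Matrix.mul_assoc]
    have step1 : ((a j : ℝ) : ℂ) = ωc ⬝ᵥ Tc *ᵥ ωc := by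
      rw [ha]
      rw [aux_ofReal_dot, aux_ofReal_mulVec, hmapT j]
    rw [step1]
    have hω' : ωc = u + s := hus.symm
    have hTu : Tc *ᵥ u = 0 := hUker u hu j
    have step2 : Tc *ᵥ ωc = Tc *ᵥ s := by
      rw [hω', Matrix.mulVec_add, hTu, zero_add]
    rw [step2, hω', add_dotProduct]
    have step3 : u ⬝ᵥ Tc *ᵥ s = 0 := by
      rw [Matrix.dotProduct_mulVec]
      have : u ᵥ* Tc = 0 := by
        rw [← hsym, Matrix.vecMul_transpose, hTu]
      rw [this, zero_dotProduct]
    rw [step3, zero_add]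
    have step4 : Tc *ᵥ s = (Mcᵀ) ^ j *ᵥ (Cc *ᵥ ((Mc ^ j) *ᵥ s)) := by
      rw [hTc, Matrix.mul_assoc, ← Matrix.mulVec_mulVec, ← Matrix.mulVec_mulVec]
    rw [step4, Matrix.dotProduct_mulVec, ← Matrix.transpose_pow, Matrix.vecMul_transpose]
  -- final bound and summability
  obtain ⟨c, hc0, hc⟩ := aux_mulVec_bound Cc
  have habs : ∀ j : ℕ, ‖a j‖ ≤ ((n : ℝ) * c) * ‖(Mc ^ j) *ᵥ s‖ ^ 2 := by
    intro j
    have h0 : ‖a j‖ = ‖((a j : ℝ) : ℂ)‖ := by rw [Complex.norm_real]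
    rw [h0, hcast j]
    set x := (Mc ^ j) *ᵥ s
    calc ‖x ⬝ᵥ (Cc *ᵥ x)‖ ≤ (n : ℝ) * ‖x‖ * ‖Cc *ᵥ x‖ := aux_dot_norm _ _
      _ ≤ (n : ℝ) * ‖x‖ * (c * ‖x‖) := by
          apply mul_le_mul_of_nonneg_left (hc x) (by positivity)
      _ = ((n : ℝ) * c) * ‖x‖ ^ 2 := by ring
  have hsummaj := (hSsum s hs).mul_left ((n : ℝ) * c)
  have hsuma : Summable a := Summable.of_norm_bounded hsummaj habs
  exact ⟨∑' j, a j, hsuma.hasSum⟩
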